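/- A subset Ψ of the twisted affine root system Φ is a maximal closed subroot system of Φ whose gradient Gr(Ψ) is a proper subset of Φ̊ that is closed in Φ̊ if and only if there is a maximal closed subroot system M of Φ̊ containing at least one short root such that Ψ = M̂ (the lift of M). -/

import Mathlib

noncomputable section

variable {V : Type*} [NormedAddCommGroup V] [InnerProductSpace ℝ V]

/-- The Cartan pairing `⟨β, α∨⟩ = 2(β,α)/(α,α)`. -/
def cartanPair (α β : V) : ℝ := 2 * (inner ℝ β α : ℝ) / (inner ℝ α α : ℝ)

/-- The reflection `s_α` on `V`: `s_α(β) = β - ⟨β,α∨⟩ α`. -/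
def reflV (α β : V) : V := β - cartanPair α β • α

/-- The affine reflection `s_x` on `V × ℝ` with respect to the bilinear form
`B((x,a),(y,b)) = (x,y)`. -/
def reflA (x y : V × ℝ) : V × ℝ :=
  y - (2 * (inner ℝ y.1 x.1 : ℝ) / (inner ℝ x.1 x.1 : ℝ)) • x

/-- A finite irreducible reduced crystallographic root system in `V`. -/
structure IsIrreducibleRootSystem (R : Set V) : Prop where
  finite : R.Finite
  spans : Submodule.span ℝ R = ⊤
  zero_notMem : (0 : V) ∉ R
  reduced : ∀ α ∈ R, ∀ c : ℝ, c • α ∈ R → c = 1 ∨ c = -1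
  cartan_int : ∀ α ∈ R, ∀ β ∈ R, ∃ n : ℤ, cartanPair α β = (n : ℝ)
  refl_mem : ∀ α ∈ R, ∀ β ∈ R, reflV α β ∈ R
  irred : ∀ A B : Set V, R = A ∪ B → A.Nonempty → B.Nonempty →
    ∃ a ∈ A, ∃ b ∈ B, (inner ℝ a b : ℝ) ≠ 0

/-- A subroot system of a set `Φ` of affine roots: a nonempty proper subset stable
under the reflections `s_x`, `x ∈ Ψ`. -/
def IsSubrootSystem (Φ Ψ : Set (V × ℝ)) : Prop :=
  Ψ.Nonempty ∧ Ψ ⊆ Φ ∧ Ψ ≠ Φ ∧ ∀ x ∈ Ψ, ∀ y ∈ Ψ, reflA x y ∈ Ψ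

/-- `Ψ` is closed in `Φ`. -/
def IsClosedIn (Φ Ψ : Set (V × ℝ)) : Prop := ∀ x ∈ Ψ, ∀ y ∈ Ψ, x + y ∈ Φ → x + y ∈ Ψ

def IsClosedSubrootSystem (Φ Ψ : Set (V × ℝ)) : Prop :=
  IsSubrootSystem Φ Ψ ∧ IsClosedIn Φ Ψ

/-- A maximal closed subroot system of `Φ`: any closed subroot system of `Φ`
containing it equals it. -/
def IsMaximalClosedSubrootSystem (Φ Ψ : Set (V × ℝ)) : Prop :=
  IsClosedSubrootSystem Φ Ψ ∧ ∀ Δ, IsClosedSubrootSystem Φ Δ → Ψ ⊆ Δ → Δ = Ψ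

/-- A subroot system of a finite root system `R`. -/
def IsSubrootSystemF (R S : Set V) : Prop :=
  S.Nonempty ∧ S ⊆ R ∧ S ≠ R ∧ ∀ α ∈ S, ∀ β ∈ S, reflV α β ∈ S

/-- `S` is closed in the finite root system `R`. -/
def IsClosedInF (R S : Set V) : Prop := ∀ α ∈ S, ∀ β ∈ S, α + β ∈ R → α + β ∈ S

def IsMaximalClosedSubrootSystemF (R S : Set V) : Prop :=
  (IsSubrootSystemF R S ∧ IsClosedInF R S) ∧
    ∀ T, IsSubrootSystemF R T → IsClosedInF R T → S ⊆ T → T = S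

/-- A `ℤ`-linear function on `S`: the restriction to `S` of an additive group
homomorphism from the subgroup of `V` generated by `S` to `ℤ`. -/
def IsZLinearOn (S : Set V) (p : V → ℤ) : Prop :=
  ∃ f : AddSubgroup.closure S →+ ℤ,
    ∀ α, ∀ h : α ∈ S, p α = f ⟨α, AddSubgroup.subset_closure h⟩

/-- An irreducible subset: nonempty and not a union of two nonempty mutually
orthogonal subsets. -/
def IsIrreducibleSubset (S : Set V) : Prop :=
  S.Nonempty ∧ ∀ A B : Set V, S = A ∪ B → A.Nonempty → B.Nonempty →
    ∃ a ∈ A, ∃ b ∈ B, (inner ℝ a b : ℝ) ≠ 0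

/-- A short root: squared length `a`. -/
def ShortR (R : Set V) (a : ℝ) (α : V) : Prop := α ∈ R ∧ (inner ℝ α α : ℝ) = a

/-- A long root: squared length `b`. -/
def LongR (R : Set V) (b : ℝ) (α : V) : Prop := α ∈ R ∧ (inner ℝ α α : ℝ) = b

/-- The data of a non simply laced irreducible root system `R` with short squared
length `a`, long squared length `b = m·a`, `m ∈ {2,3}`. -/
structure IsTwistedData (R : Set V) (a b : ℝ) (m : ℕ) : Prop where
  root : IsIrreducibleRootSystem R
  len : ∀ α ∈ R, (inner ℝ α α : ℝ) = a ∨ (inner ℝ α α : ℝ) = b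
  a_pos : 0 < a
  a_lt_b : a < b
  ex_short : ∃ α ∈ R, (inner ℝ α α : ℝ) = a
  ex_long : ∃ α ∈ R, (inner ℝ α α : ℝ) = b
  ratio : b = (m : ℝ) * a
  m23 : m = 2 ∨ m = 3

/-- The twisted affine root system attached to `(R, a, b, m)`. -/
def twistedRS (R : Set V) (a b : ℝ) (m : ℕ) : Set (V × ℝ) :=
  {x | (ShortR R a x.1 ∧ ∃ r : ℤ, x.2 = (r : ℝ)) ∨
       (LongR R b x.1 ∧ ∃ r : ℤ, x.2 = (m : ℝ) * (r : ℝ))}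

/-- The gradient of a set of affine roots (twisted case). -/
def GrT (Ψ : Set (V × ℝ)) : Set V := {α | ∃ c : ℝ, (α, c) ∈ Ψ}

/-- `Z_α(Ψ) = {c ∈ ℤ : α + cδ ∈ Ψ}`. -/
def ZSetT (Ψ : Set (V × ℝ)) (α : V) : Set ℤ := {c | (α, (c : ℝ)) ∈ Ψ}

/-- The difference set `{r - r' : r, r' ∈ Z_α(Ψ)}`. -/
def DiffSetT (Ψ : Set (V × ℝ)) (α : V) : Set ℤ :=
  {d | ∃ r ∈ ZSetT Ψ α, ∃ r' ∈ ZSetT Ψ α, d = r - r'}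

/-- A semi-closed subset of `R`: not closed, and any failure of closedness comes
from two short roots summing to a long root. -/
def IsSemiClosed (R : Set V) (a b : ℝ) (S : Set V) : Prop :=
  ¬ IsClosedInF R S ∧
    ∀ α ∈ S, ∀ β ∈ S, α + β ∈ R \ S →
      ShortR R a α ∧ ShortR R a β ∧ LongR R b (α + β)

/-- The lift of a subset `S ⊆ R` in the twisted affine root system. -/
def liftT (R : Set V) (a b : ℝ) (m : ℕ) (S : Set V) : Set (V × ℝ) :=
  {x | (ShortR R a x.1 ∧ x.1 ∈ S ∧ ∃ r : ℤ, x.2 = (r : ℝ)) ∨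
       (LongR R b x.1 ∧ x.1 ∈ S ∧ ∃ r : ℤ, x.2 = (m : ℝ) * (r : ℝ))}

section AuxBasic

variable {V : Type*} [NormedAddCommGroup V] [InnerProductSpace ℝ V]

local notation "⟪" x ", " y "⟫" => (inner ℝ x y : ℝ)

lemma cartanPair_mul_self {α β : V} (h : ⟪α, α⟫ ≠ 0) :
    cartanPair α β * ⟪α, α⟫ = 2 * ⟪β, α⟫ := by
  unfold cartanPair; field_simp

lemma cartanPair_self {α : V} (h : ⟪α, α⟫ ≠ 0) : cartanPair α α = 2 := by
  unfold cartanPair; field_simp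

lemma reflV_self {α : V} (h : ⟪α, α⟫ ≠ 0) : reflV α α = -α := by
  unfold reflV; rw [cartanPair_self h]; module

lemma cartanPair_add_right (α x y : V) :
    cartanPair α (x + y) = cartanPair α x + cartanPair α y := by
  unfold cartanPair; rw [inner_add_left]; ring

lemma cartanPair_neg_right (α x : V) : cartanPair α (-x) = -cartanPair α x := by
  unfold cartanPair; rw [inner_neg_left]; ring

lemma cartanPair_zero_of_orth {α β : V} (h : ⟪β, α⟫ = 0) : cartanPair α β = 0 := by
  unfold cartanPair; rw [h]; simp

lemma reflV_add (α x y : V) : reflV α (x + y) = reflV α x + reflV α y := by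
  unfold reflV; rw [cartanPair_add_right, add_smul]; abel

lemma reflV_orth {α β : V} (h : ⟪β, α⟫ = 0) : reflV α β = β := by
  unfold reflV; rw [cartanPair_zero_of_orth h]; simp

lemma inner_reflV_self {α β : V} (h : ⟪α, α⟫ ≠ 0) :
    ⟪reflV α β, reflV α β⟫ = ⟪β, β⟫ := by
  unfold reflV cartanPair
  rw [inner_sub_sub_self]
  simp only [real_inner_smul_left, real_inner_smul_right, real_inner_comm α β]
  field_simp
  ring

lemma cartanPair_reflV {α β : V} (h : ⟪α, α⟫ ≠ 0) :
    cartanPair α (reflV α β) = -cartanPair α β := by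
  unfold reflV cartanPair
  rw [inner_sub_left, real_inner_smul_left]
  field_simp
  ring

lemma reflV_invol {α β : V} (h : ⟪α, α⟫ ≠ 0) : reflV α (reflV α β) = β := by
  have h2 := cartanPair_reflV (β := β) h
  unfold reflV at h2 ⊢
  rw [h2]
  module

end AuxBasic
section AuxRoot

variable {V : Type*} [NormedAddCommGroup V] [InnerProductSpace ℝ V]
variable {R : Set V} {a b : ℝ} {m : ℕ}

local notation "⟪" x ", " y "⟫" => (inner ℝ x y : ℝ)

lemma IsTwistedData.b_pos (hT : IsTwistedData R a b m) : 0 < b :=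
  hT.a_pos.trans hT.a_lt_b

lemma IsTwistedData.inner_self_pos (hT : IsTwistedData R a b m) {α : V} (hα : α ∈ R) :
    0 < ⟪α, α⟫ := by
  rcases hT.len α hα with h | h <;> rw [h]
  · exact hT.a_pos
  · exact hT.b_pos

lemma IsTwistedData.inner_self_ne (hT : IsTwistedData R a b m) {α : V} (hα : α ∈ R) :
    ⟪α, α⟫ ≠ 0 := (hT.inner_self_pos hα).ne'

lemma IsTwistedData.neg_mem (hT : IsTwistedData R a b m) {α : V} (hα : α ∈ R) :
    -α ∈ R := by
  have := hT.root.refl_mem α hα α hα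
  rwa [reflV_self (hT.inner_self_ne hα)] at this

lemma IsTwistedData.m_pos (hT : IsTwistedData R a b m) : (0:ℝ) < (m:ℝ) := by
  rcases hT.m23 with h | h <;> rw [h] <;> norm_num

/-- Key: two roots with negative inner product and not opposite sum to a root. -/
lemma IsTwistedData.sum_mem (hT : IsTwistedData R a b m) {α β : V}
    (hα : α ∈ R) (hβ : β ∈ R) (hneg : ⟪α, β⟫ < 0) (hne : α ≠ -β) : α + β ∈ R := by
  obtain ⟨nq, hq⟩ := hT.root.cartan_int α hα β hβ
  obtain ⟨np, hp⟩ := hT.root.cartan_int β hβ α hα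
  have hA := hT.inner_self_pos hα
  have hB := hT.inner_self_pos hβ
  have hqA : (nq:ℝ) * ⟪α, α⟫ = 2 * ⟪β, α⟫ := by
    rw [← hq]; exact cartanPair_mul_self hA.ne'
  have hpB : (np:ℝ) * ⟪β, β⟫ = 2 * ⟪α, β⟫ := by
    rw [← hp]; exact cartanPair_mul_self hB.ne'
  have hba : ⟪β, α⟫ < 0 := by rwa [real_inner_comm]
  have hnq1 : nq ≤ -1 := by
    by_contra h
    push_neg at h
    have : (0:ℝ) ≤ (nq:ℝ) := by exact_mod_cast (by omega : (0:ℤ) ≤ nq)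
    nlinarith
  have hnp1 : np ≤ -1 := by
    by_contra h
    push_neg at h
    have : (0:ℝ) ≤ (np:ℝ) := by exact_mod_cast (by omega : (0:ℤ) ≤ np)
    nlinarith
  rcases eq_or_lt_of_le hnq1 with hq1 | hq2
  · -- cartanPair α β = -1, so reflV α β = β + α
    have : reflV α β = α + β := by
      unfold reflV
      rw [hq, hq1]
      push_cast
      module
    rw [← this]; exact hT.root.refl_mem α hα β hβ
  rcases eq_or_lt_of_le hnp1 with hp1 | hp2
  · have : reflV β α = α + β := by
      unfold reflV
      rw [hp, hp1]
      push_cast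
      module
    rw [← this]; exact hT.root.refl_mem β hβ α hα
  · exfalso
    have hnq2 : (nq:ℝ) ≤ -2 := by exact_mod_cast (by omega : nq ≤ -2)
    have hnp2 : (np:ℝ) ≤ -2 := by exact_mod_cast (by omega : np ≤ -2)
    have hab : ⟪α, β⟫ = ⟪β, α⟫ := real_inner_comm _ _
    have hsum : ⟪α + β, α + β⟫ ≤ 0 := by
      rw [real_inner_add_add_self]
      nlinarith
    have h0 : α + β = 0 := by
      have := real_inner_self_nonneg (x := α + β)
      have : ⟪α + β, α + β⟫ = 0 := le_antisymm hsum this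
      exact inner_self_eq_zero.mp (by exact_mod_cast this)
    apply hne
    have : α = -β + (α + β) := by abel
    rw [this, h0]; abel

/-- Key length lemma: if `u` is long and `u + v ∈ R` then `u+v` has `v`'s length
and `2(u,v) = -b`. -/
lemma IsTwistedData.long_add (hT : IsTwistedData R a b m) {u v : V}
    (hu : u ∈ R) (hv : v ∈ R) (hul : ⟪u, u⟫ = b) (hs : u + v ∈ R) :
    ⟪u + v, u + v⟫ = ⟪v, v⟫ ∧ 2 * ⟪u, v⟫ = -b := by
  obtain ⟨n, hn⟩ := hT.root.cartan_int u hu v hv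
  have hb := hT.b_pos
  have ha := hT.a_pos
  have hab := hT.a_lt_b
  have hnb : (n:ℝ) * b = 2 * ⟪v, u⟫ := by
    rw [← hul, ← hn]; exact cartanPair_mul_self (by rw [hul]; exact hb.ne')
  have hvu : ⟪v, u⟫ = ⟪u, v⟫ := real_inner_comm _ _
  have hexp : ⟪u + v, u + v⟫ = b + ⟪v, v⟫ + (n:ℝ) * b := by
    rw [real_inner_add_add_self, hul]; linarith [hnb, hvu]
  have hn1 : (n:ℝ) = -1 := by
    have key : ∀ k : ℤ, (k:ℝ) * b = 0 ∨ (k:ℝ)*b ≤ -b ∨ b ≤ (k:ℝ)*b := by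
      intro k
      rcases lt_trichotomy k 0 with h | h | h
      · right; left
        have : (k:ℝ) ≤ -1 := by exact_mod_cast (by omega : k ≤ -1)
        nlinarith
      · left; rw [h]; simp
      · right; right
        have : (1:ℝ) ≤ (k:ℝ) := by exact_mod_cast (by omega : (1:ℤ) ≤ k)
        nlinarith
    -- (n+1) * b must be the difference of two lengths
    have hd : ⟪u + v, u + v⟫ - ⟪v, v⟫ = ((n+1):ℤ) * b := by
      rw [hexp]; push_cast; ring
    have hlv := hT.len v hv
    have hlw := hT.len (u+v) hs
    have h1 := key (n+1)
    rcases hlv with h2 | h2 <;> rcases hlw with h3 | h3 <;>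
      rcases h1 with h4 | h4 | h4 <;>
      · rw [h2, h3] at hd
        push_cast at hd h4 ⊢
        first
        | linarith
        | nlinarith
  constructor
  · rw [hexp, hn1]; ring
  · linarith [hnb, hvu, hn1.symm ▸ hnb]

/-- no root has squared length `a + b`; so a long root orthogonal to a short one
never sums to a root (and similar). Stated via `long_add`. -/
lemma IsTwistedData.no_sum_of_long_orth (hT : IsTwistedData R a b m) {u v : V}
    (hu : u ∈ R) (hv : v ∈ R) (hul : ⟪u, u⟫ = b) (horth : ⟪u, v⟫ = 0) :
    u + v ∉ R := by
  intro hs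
  have := (hT.long_add hu hv hul hs).2
  rw [horth] at this
  have := hT.b_pos
  linarith

lemma IsTwistedData.cartan_short_long (hT : IsTwistedData R a b m) {s l : V}
    (hs : s ∈ R) (hl : l ∈ R) (hss : ⟪s, s⟫ = a) (hll : ⟪l, l⟫ = b) :
    cartanPair s l = (m:ℝ) * cartanPair l s := by
  unfold cartanPair
  rw [hss, hll, hT.ratio, real_inner_comm l s]
  have ha := hT.a_pos.ne'
  have hm := hT.m_pos.ne'
  field_simp

end AuxRoot
section AuxAffine

variable {V : Type*} [NormedAddCommGroup V] [InnerProductSpace ℝ V]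
variable {R : Set V} {a b : ℝ} {m : ℕ}

local notation "⟪" x ", " y "⟫" => (inner ℝ x y : ℝ)

lemma reflA_eq (x y : V × ℝ) :
    reflA x y = (reflV x.1 y.1, y.2 - cartanPair x.1 y.1 * x.2) := by
  unfold reflA reflV cartanPair
  ext
  · simp
  · simp [smul_eq_mul]

lemma mem_twisted_R {x : V × ℝ} (hx : x ∈ twistedRS R a b m) : x.1 ∈ R := by
  rcases hx with ⟨h, -⟩ | ⟨h, -⟩ <;> exact h.1

lemma mem_twisted_coord {x : V × ℝ} (hT : IsTwistedData R a b m)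
    (hx : x ∈ twistedRS R a b m) : ∃ r : ℤ, x.2 = (r:ℝ) := by
  rcases hx with ⟨-, r, hr⟩ | ⟨-, r, hr⟩
  · exact ⟨r, hr⟩
  · exact ⟨(m:ℤ) * r, by rw [hr]; push_cast; ring⟩

lemma mem_twisted_short {x : V × ℝ} (hT : IsTwistedData R a b m)
    (hx : x ∈ twistedRS R a b m) (hs : ⟪x.1, x.1⟫ = a) : ∃ r : ℤ, x.2 = (r:ℝ) := by
  rcases hx with ⟨-, r, hr⟩ | ⟨hL, -⟩
  · exact ⟨r, hr⟩
  · exact absurd (hs ▸ hL.2) hT.a_lt_b.ne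

lemma mem_twisted_long {x : V × ℝ} (hT : IsTwistedData R a b m)
    (hx : x ∈ twistedRS R a b m) (hl : ⟪x.1, x.1⟫ = b) :
    ∃ r : ℤ, x.2 = (m:ℝ) * (r:ℝ) := by
  rcases hx with ⟨hS, -⟩ | ⟨-, r, hr⟩
  · exact absurd (hl ▸ hS.2) hT.a_lt_b.ne'
  · exact ⟨r, hr⟩

lemma mem_twisted_of_short (hT : IsTwistedData R a b m) {α : V} (hα : α ∈ R)
    (hs : ⟪α, α⟫ = a) (r : ℤ) : ((α, (r:ℝ)) : V × ℝ) ∈ twistedRS R a b m :=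
  Or.inl ⟨⟨hα, hs⟩, r, rfl⟩

lemma mem_twisted_of_long (hT : IsTwistedData R a b m) {α : V} (hα : α ∈ R)
    (hl : ⟪α, α⟫ = b) (r : ℤ) :
    ((α, (m:ℝ) * (r:ℝ)) : V × ℝ) ∈ twistedRS R a b m :=
  Or.inr ⟨⟨hα, hl⟩, r, rfl⟩

lemma mem_twisted_zero (hT : IsTwistedData R a b m) {α : V} (hα : α ∈ R) :
    ((α, (0:ℝ)) : V × ℝ) ∈ twistedRS R a b m := by
  rcases hT.len α hα with h | h
  · exact Or.inl ⟨⟨hα, h⟩, 0, by norm_num⟩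
  · exact Or.inr ⟨⟨hα, h⟩, 0, by norm_num⟩

lemma mem_lift_iff (hT : IsTwistedData R a b m) {S : Set V} {x : V × ℝ} :
    x ∈ liftT R a b m S ↔ x ∈ twistedRS R a b m ∧ x.1 ∈ S := by
  constructor
  · rintro (⟨h1, h2, h3⟩ | ⟨h1, h2, h3⟩)
    · exact ⟨Or.inl ⟨h1, h3⟩, h2⟩
    · exact ⟨Or.inr ⟨h1, h3⟩, h2⟩
  · rintro ⟨(⟨h1, h3⟩ | ⟨h1, h3⟩), h2⟩
    · exact Or.inl ⟨h1, h2, h3⟩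
    · exact Or.inr ⟨h1, h2, h3⟩

lemma lift_subset_twisted (hT : IsTwistedData R a b m) (S : Set V) :
    liftT R a b m S ⊆ twistedRS R a b m := fun x hx => ((mem_lift_iff hT).mp hx).1

lemma GrT_lift (hT : IsTwistedData R a b m) {S : Set V} (hS : S ⊆ R) :
    GrT (liftT R a b m S) = S := by
  ext α
  constructor
  · rintro ⟨c, hc⟩
    exact ((mem_lift_iff hT).mp hc).2
  · intro hα
    exact ⟨0, (mem_lift_iff hT).mpr ⟨mem_twisted_zero hT (hS hα), hα⟩⟩

lemma lift_mono {S T : Set V} (hT : IsTwistedData R a b m) (h : S ⊆ T) :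
    liftT R a b m S ⊆ liftT R a b m T := by
  intro x hx
  rw [mem_lift_iff hT] at hx ⊢
  exact ⟨hx.1, h hx.2⟩

lemma lift_ne_twisted (hT : IsTwistedData R a b m) {S : Set V} (hne : S ≠ R)
    (hS : S ⊆ R) : liftT R a b m S ≠ twistedRS R a b m := by
  intro h
  apply hne
  apply Set.Subset.antisymm hS
  intro α hα
  have : ((α, (0:ℝ)) : V × ℝ) ∈ liftT R a b m S := by
    rw [h]; exact mem_twisted_zero hT hα
  exact ((mem_lift_iff hT).mp this).2


lemma mem_twisted_of_short' (hT : IsTwistedData R a b m) {α : V} {t : ℝ}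
    (hα : α ∈ R) (hs : ⟪α, α⟫ = a) (r : ℤ) (ht : t = (r:ℝ)) :
    ((α, t) : V × ℝ) ∈ twistedRS R a b m := Or.inl ⟨⟨hα, hs⟩, r, ht⟩

lemma mem_twisted_of_long' (hT : IsTwistedData R a b m) {α : V} {t : ℝ}
    (hα : α ∈ R) (hl : ⟪α, α⟫ = b) (r : ℤ) (ht : t = (m:ℝ) * (r:ℝ)) :
    ((α, t) : V × ℝ) ∈ twistedRS R a b m := Or.inr ⟨⟨hα, hl⟩, r, ht⟩

/-- The key stability computation: the lift of a reflV-stable subset of `R`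
is stable under affine reflections. -/
lemma lift_stable (hT : IsTwistedData R a b m) {S : Set V} (hS : S ⊆ R)
    (hstab : ∀ α ∈ S, ∀ β ∈ S, reflV α β ∈ S) :
    ∀ x ∈ liftT R a b m S, ∀ y ∈ liftT R a b m S,
      reflA x y ∈ liftT R a b m S := by
  intro x hx y hy
  rw [mem_lift_iff hT] at hx hy ⊢
  obtain ⟨hxT, hxS⟩ := hx
  obtain ⟨hyT, hyS⟩ := hy
  have hxR : x.1 ∈ R := mem_twisted_R hxT
  have hyR : y.1 ∈ R := mem_twisted_R hyT
  have hwR : reflV x.1 y.1 ∈ R := hT.root.refl_mem x.1 hxR y.1 hyR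
  have hwS : reflV x.1 y.1 ∈ S := hstab x.1 hxS y.1 hyS
  have hwlen : ⟪reflV x.1 y.1, reflV x.1 y.1⟫ = ⟪y.1, y.1⟫ :=
    inner_reflV_self (hT.inner_self_ne hxR)
  obtain ⟨n, hn⟩ := hT.root.cartan_int x.1 hxR y.1 hyR
  obtain ⟨s, hs⟩ := mem_twisted_coord hT hxT
  rw [reflA_eq]
  constructor
  swap
  · exact hwS
  rcases hT.len y.1 hyR with hyl | hyl
  · -- y short: any integer coordinate
    obtain ⟨r, hr⟩ := mem_twisted_short hT hyT hyl
    apply mem_twisted_of_short' hT hwR (hwlen.trans hyl) (r - n * s)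
    show y.2 - cartanPair x.1 y.1 * x.2 = _
    rw [hr, hs, hn]
    push_cast
    ring
  · -- y long
    obtain ⟨r, hr⟩ := mem_twisted_long hT hyT hyl
    rcases hT.len x.1 hxR with hxl | hxl
    · -- x short: cartanPair x1 y1 is divisible by m
      obtain ⟨n', hn'⟩ := hT.root.cartan_int y.1 hyR x.1 hxR
      have hdvd : cartanPair x.1 y.1 = (m:ℝ) * (n':ℝ) := by
        rw [hT.cartan_short_long hxR hyR hxl hyl, hn']
      obtain ⟨s', hs'⟩ := mem_twisted_short hT hxT hxl
      apply mem_twisted_of_long' hT hwR (hwlen.trans hyl) (r - n' * s')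
      show y.2 - cartanPair x.1 y.1 * x.2 = _
      rw [hr, hs', hdvd]
      push_cast
      ring
    · -- x long
      obtain ⟨s', hs'⟩ := mem_twisted_long hT hxT hxl
      apply mem_twisted_of_long' hT hwR (hwlen.trans hyl) (r - n * s')
      show y.2 - cartanPair x.1 y.1 * x.2 = _
      rw [hr, hs', hn]
      push_cast
      ring

end AuxAffine
section AuxLift

variable {V : Type*} [NormedAddCommGroup V] [InnerProductSpace ℝ V]
variable {R : Set V} {a b : ℝ} {m : ℕ}

local notation "⟪" x ", " y "⟫" => (inner ℝ x y : ℝ)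

/-- (A4): the lift of a proper nonempty closed reflV-stable subset of `R` is a
closed subroot system of the twisted affine root system. -/
lemma lift_closedSRS (hT : IsTwistedData R a b m) {S : Set V}
    (hne : S.Nonempty) (hS : S ⊆ R) (hpr : S ≠ R)
    (hstab : ∀ α ∈ S, ∀ β ∈ S, reflV α β ∈ S) (hcl : IsClosedInF R S) :
    IsClosedSubrootSystem (twistedRS R a b m) (liftT R a b m S) := by
  refine ⟨⟨?_, lift_subset_twisted hT S, lift_ne_twisted hT hpr hS, lift_stable hT hS hstab⟩, ?_⟩
  · obtain ⟨α, hα⟩ := hne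
    exact ⟨(α, 0), (mem_lift_iff hT).mpr ⟨mem_twisted_zero hT (hS hα), hα⟩⟩
  · intro x hx y hy hxy
    rw [mem_lift_iff hT] at hx hy ⊢
    refine ⟨hxy, ?_⟩
    have h1 : (x + y).1 = x.1 + y.1 := rfl
    rw [h1]
    exact hcl x.1 hx.2 y.1 hy.2 (h1 ▸ mem_twisted_R hxy)

/-- The set of affine roots with coordinate in `mℤ` is a closed subroot system. -/
lemma deltam_closedSRS (hT : IsTwistedData R a b m) :
    IsClosedSubrootSystem (twistedRS R a b m)
      {x ∈ twistedRS R a b m | ∃ r : ℤ, x.2 = (m:ℝ) * (r:ℝ)} := by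
  set D := {x ∈ twistedRS R a b m | ∃ r : ℤ, x.2 = (m:ℝ) * (r:ℝ)} with hD
  obtain ⟨αs, hαs, hαsl⟩ := hT.ex_short
  have hmne : (m:ℝ) ≠ 0 := hT.m_pos.ne'
  refine ⟨⟨?_, fun x hx => hx.1, ?_, ?_⟩, ?_⟩
  · exact ⟨(αs, 0), mem_twisted_zero hT hαs, 0, by norm_num⟩
  · -- proper: (αs, 1) not in D
    intro h
    have h1 : ((αs, (1:ℝ)) : V × ℝ) ∈ twistedRS R a b m :=
      mem_twisted_of_short' hT hαs hαsl 1 (by norm_num)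
    rw [← h] at h1
    obtain ⟨-, r, hr⟩ := h1
    have : (m:ℤ) * r = 1 := by
      have : ((m:ℤ) * r : ℝ) = 1 := by push_cast; rw [← hr]
      exact_mod_cast this
    rcases hT.m23 with hm | hm <;> subst hm <;> omega
  · -- stable
    intro x hx y hy
    obtain ⟨hxT, sx, hsx⟩ := hx
    obtain ⟨hyT, sy, hsy⟩ := hy
    have hxR := mem_twisted_R hxT
    have hyR := mem_twisted_R hyT
    obtain ⟨n, hn⟩ := hT.root.cartan_int x.1 hxR y.1 hyR
    have hwR : reflV x.1 y.1 ∈ R := hT.root.refl_mem x.1 hxR y.1 hyR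
    have hwlen : ⟪reflV x.1 y.1, reflV x.1 y.1⟫ = ⟪y.1, y.1⟫ :=
      inner_reflV_self (hT.inner_self_ne hxR)
    have hcoord : y.2 - cartanPair x.1 y.1 * x.2 = (m:ℝ) * ((sy - n * sx : ℤ) : ℝ) := by
      rw [hsy, hsx, hn]; push_cast; ring
    constructor
    · rw [reflA_eq]
      rcases hT.len y.1 hyR with hyl | hyl
      · exact mem_twisted_of_short' hT hwR (hwlen.trans hyl) ((m:ℤ) * (sy - n * sx))
          (by rw [hcoord]; push_cast; ring)
      · exact mem_twisted_of_long' hT hwR (hwlen.trans hyl) (sy - n * sx) hcoord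
    · rw [reflA_eq]
      exact ⟨sy - n * sx, hcoord⟩
  · -- closed
    intro x hx y hy hxy
    obtain ⟨hxT, sx, hsx⟩ := hx
    obtain ⟨hyT, sy, hsy⟩ := hy
    refine ⟨hxy, sx + sy, ?_⟩
    have : (x + y).2 = x.2 + y.2 := rfl
    rw [this, hsx, hsy]; push_cast; ring

end AuxLift
section AuxMonster

variable {V : Type*} [NormedAddCommGroup V] [InnerProductSpace ℝ V]
variable {R : Set V} {a b : ℝ} {m : ℕ}

local notation "⟪" x ", " y "⟫" => (inner ℝ x y : ℝ)

/-- Maximality of the lift of a maximal closed subroot system containing a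
short root. -/
lemma lift_maximal (hT : IsTwistedData R a b m) {M : Set V}
    (hM : IsMaximalClosedSubrootSystemF R M)
    (hshort : ∃ μ ∈ M, ShortR R a μ) :
    ∀ Δ, IsClosedSubrootSystem (twistedRS R a b m) Δ →
      liftT R a b m M ⊆ Δ → Δ = liftT R a b m M := by
  intro Δ hΔfull hsub
  obtain ⟨⟨hΔne, hΔsub, hΔneq, hΔstab⟩, hΔcl⟩ := hΔfull
  obtain ⟨⟨⟨hMne, hMR, hMneR, hMstab⟩, hMcl⟩, hMmax⟩ := hM
  obtain ⟨μ0, hμ0M, hμ0R, hμ0s⟩ := hshort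
  have hMneg : ∀ μ ∈ M, -μ ∈ M := by
    intro μ hμ
    have := hMstab μ hμ μ hμ
    rwa [reflV_self (hT.inner_self_ne (hMR hμ))] at this
  -- the set of "full" roots
  set Full : Set V :=
    {α | (ShortR R a α ∧ ∀ r : ℤ, ((α, (r:ℝ)) : V × ℝ) ∈ Δ) ∨
         (LongR R b α ∧ ∀ r : ℤ, ((α, (m:ℝ) * (r:ℝ)) : V × ℝ) ∈ Δ)} with hFulldef
  have hFullR : Full ⊆ R := by rintro α (⟨h, -⟩ | ⟨h, -⟩) <;> exact h.1
  have hFullget : ∀ α ∈ Full, ∀ t : ℝ,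
      ((α, t) : V × ℝ) ∈ twistedRS R a b m → ((α, t) : V × ℝ) ∈ Δ := by
    rintro α (⟨hS, h⟩ | ⟨hL, h⟩) t ht
    · obtain ⟨r, hr⟩ := mem_twisted_short hT ht hS.2
      rw [show t = ((r:ℤ):ℝ) from hr]
      exact h r
    · obtain ⟨r, hr⟩ := mem_twisted_long hT ht hL.2
      rw [show t = (m:ℝ) * ((r:ℤ):ℝ) from hr]
      exact h r
  have hFullintro : ∀ α ∈ R,
      (∀ t : ℝ, ((α, t) : V × ℝ) ∈ twistedRS R a b m → ((α, t) : V × ℝ) ∈ Δ) →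
      α ∈ Full := by
    intro α hα h
    rcases hT.len α hα with hl | hl
    · exact Or.inl ⟨⟨hα, hl⟩, fun r => h _ (mem_twisted_of_short' hT hα hl r rfl)⟩
    · exact Or.inr ⟨⟨hα, hl⟩, fun r => h _ (mem_twisted_of_long' hT hα hl r rfl)⟩
  have hFull0 : ∀ α ∈ Full, ((α, (0:ℝ)) : V × ℝ) ∈ Δ := by
    intro α hα
    exact hFullget α hα 0 (mem_twisted_zero hT (hFullR hα))
  have hMFull : M ⊆ Full := by
    intro μ hμ
    apply hFullintro μ (hMR hμ)
    intro t ht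
    exact hsub ((mem_lift_iff hT).mpr ⟨ht, hμ⟩)
  have hFull_stab : ∀ α ∈ Full, ∀ β ∈ Full, reflV α β ∈ Full := by
    intro α hα β hβ
    have hαR := hFullR hα
    have hβR := hFullR hβ
    have hwR : reflV α β ∈ R := hT.root.refl_mem α hαR β hβR
    have hwlen : ⟪reflV α β, reflV α β⟫ = ⟪β, β⟫ :=
      inner_reflV_self (hT.inner_self_ne hαR)
    apply hFullintro _ hwR
    intro t ht
    have hβt : ((β, t) : V × ℝ) ∈ twistedRS R a b m := by
      rcases ht with ⟨hS, r, hr⟩ | ⟨hL, r, hr⟩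
      · exact mem_twisted_of_short' hT hβR (by rw [← hwlen]; exact hS.2) r hr
      · exact mem_twisted_of_long' hT hβR (by rw [← hwlen]; exact hL.2) r hr
    have := hΔstab (α, 0) (hFull0 α hα) (β, t) (hFullget β hβ t hβt)
    rw [reflA_eq] at this
    simpa using this
  have hFull_closed : ∀ α ∈ Full, ∀ β ∈ Full, α + β ∈ R → α + β ∈ Full := by
    intro α hα β hβ hsumR
    have hαR := hFullR hα
    have hβR := hFullR hβ
    apply hFullintro _ hsumR
    intro t ht
    by_cases hαl : ⟪α, α⟫ = a
    · obtain ⟨j, hj⟩ := mem_twisted_coord hT ht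
      have h1 : ((α, t) : V × ℝ) ∈ Δ :=
        hFullget α hα t (mem_twisted_of_short' hT hαR hαl j hj)
      have h2 : ((β, (0:ℝ)) : V × ℝ) ∈ Δ := hFull0 β hβ
      have hsum_eq : ((α, t) : V × ℝ) + (β, 0) = (α + β, t) := by
        ext <;> simp
      have := hΔcl _ h1 _ h2 (by rw [hsum_eq]; exact ht)
      rwa [hsum_eq] at this
    · have hαb : ⟪α, α⟫ = b := (hT.len α hαR).resolve_left hαl
      by_cases hβl : ⟪β, β⟫ = a
      · obtain ⟨j, hj⟩ := mem_twisted_coord hT ht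
        have h1 : ((β, t) : V × ℝ) ∈ Δ :=
          hFullget β hβ t (mem_twisted_of_short' hT hβR hβl j hj)
        have h2 : ((α, (0:ℝ)) : V × ℝ) ∈ Δ := hFull0 α hα
        have hsum_eq : ((α, (0:ℝ)) : V × ℝ) + (β, t) = (α + β, t) := by
          ext <;> simp
        have := hΔcl _ h2 _ h1 (by rw [hsum_eq]; exact ht)
        rwa [hsum_eq] at this
      · -- both long, so the sum is long
        have hβb : ⟪β, β⟫ = b := (hT.len β hβR).resolve_left hβl
        have hwb : ⟪α + β, α + β⟫ = b :=
          ((hT.long_add hαR hβR hαb hsumR).1).trans hβb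
        obtain ⟨r, hr⟩ := mem_twisted_long hT ht hwb
        have h1 : ((α, t) : V × ℝ) ∈ Δ :=
          hFullget α hα t (mem_twisted_of_long' hT hαR hαb r hr)
        have h2 : ((β, (0:ℝ)) : V × ℝ) ∈ Δ := hFull0 β hβ
        have hsum_eq : ((α, t) : V × ℝ) + (β, 0) = (α + β, t) := by
          ext <;> simp
        have := hΔcl _ h1 _ h2 (by rw [hsum_eq]; exact ht)
        rwa [hsum_eq] at this
  have hFull_ne : Full ≠ R := by
    intro h
    apply hΔneq
    apply Set.Subset.antisymm hΔsub
    intro x hx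
    have hx1 : x.1 ∈ Full := by rw [h]; exact mem_twisted_R hx
    have := hFullget x.1 hx1 x.2 (by rwa [Prod.mk.eta])
    rwa [Prod.mk.eta] at this
  have hFullM : Full = M :=
    hMmax Full ⟨⟨μ0, hMFull hμ0M⟩, hFullR, hFull_ne, hFull_stab⟩ hFull_closed hMFull
  -- now the key claim
  have key : ∀ x ∈ Δ, x.1 ∈ M := by
    intro x hxΔ
    by_contra hxM
    have hγ0R : x.1 ∈ R := mem_twisted_R (hΔsub hxΔ)
    obtain ⟨r0, hr0⟩ := mem_twisted_coord hT (hΔsub hxΔ)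
    -- (P1)
    have P1 : ∀ μ ∈ M, ⟪μ, μ⟫ = a → x.1 + μ ∈ R → False := by
      intro μ hμM hμs hsumR
      have hfull : x.1 + μ ∈ Full := by
        apply hFullintro _ hsumR
        intro t ht
        obtain ⟨j, hj⟩ := mem_twisted_coord hT ht
        have h2 : ((μ, ((j - r0 : ℤ) : ℝ)) : V × ℝ) ∈ Δ :=
          hsub ((mem_lift_iff hT).mpr
            ⟨mem_twisted_of_short' hT (hMR hμM) hμs (j - r0) rfl, hμM⟩)
        have hsum_eq : x + (μ, ((j - r0 : ℤ) : ℝ)) = ((x.1 + μ, t) : V × ℝ) := by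
          ext
          · simp
          · show x.2 + ((j - r0 : ℤ) : ℝ) = t
            have hj' : t = (j:ℝ) := hj
            rw [hr0, hj']; push_cast; ring
        have := hΔcl x hxΔ _ h2 (by rw [hsum_eq]; exact ht)
        rwa [hsum_eq] at this
      rw [hFullM] at hfull
      have : (x.1 + μ) + (-μ) ∈ M := by
        apply hMcl _ hfull _ (hMneg μ hμM)
        have : (x.1 + μ) + (-μ) = x.1 := by abel
        rw [this]; exact hγ0R
      rw [show (x.1 + μ) + (-μ) = x.1 by abel] at this
      exact hxM this
    -- (P0)
    have P0 : ∀ μ ∈ M, ⟪μ, μ⟫ = a → ⟪x.1, μ⟫ = 0 := by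
      intro μ hμM hμs
      by_contra h0
      rcases lt_trichotomy ⟪x.1, μ⟫ 0 with hlt | heq | hgt
      · have hne : x.1 ≠ -μ := fun h => hxM (h ▸ hMneg μ hμM)
        exact P1 μ hμM hμs (hT.sum_mem hγ0R (hMR hμM) hlt hne)
      · exact h0 heq
      · have hlt : ⟪x.1, -μ⟫ < 0 := by rw [inner_neg_right]; linarith
        have hne : x.1 ≠ -(-μ) := by rw [neg_neg]; exact fun h => hxM (h ▸ hμM)
        have hs' : ⟪(-μ : V), -μ⟫ = a := by rw [inner_neg_neg]; exact hμs
        exact P1 (-μ) (hMneg μ hμM) hs'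
          (hT.sum_mem hγ0R (hMR (hMneg μ hμM)) hlt hne)
    -- the island set
    set Bo : Set V :=
      {v | v ∈ R ∧ v ∉ M ∧ ∀ μ ∈ M, ⟪μ, μ⟫ = a → (⟪v, μ⟫ = 0 ∧ v + μ ∉ R)}
      with hBodef
    have hγ0Bo : x.1 ∈ Bo :=
      ⟨hγ0R, hxM, fun μ hμ hs => ⟨P0 μ hμ hs, fun h => P1 μ hμ hs h⟩⟩
    -- the ν-trick lemma
    have hLemNu : ∀ u ∈ M, ∀ v ∈ Bo, ⟪v, u⟫ ≠ 0 →
        ⟪u, u⟫ = b ∧ ∀ μ ∈ M, ⟪μ, μ⟫ = a → ⟪u, μ⟫ = 0 := by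
      intro u huM v hvBo hvu
      obtain ⟨hvR, hvM, hvprop⟩ := hvBo
      have huR := hMR huM
      have hub : ⟪u, u⟫ = b := by
        rcases hT.len u huR with h | h
        · exact absurd (hvprop u huM h).1 hvu
        · exact h
      refine ⟨hub, ?_⟩
      intro μ hμM hμs
      by_contra huμ
      obtain ⟨μ', hμ'M, hμ's, hneg⟩ :
          ∃ μ', μ' ∈ M ∧ ⟪μ', μ'⟫ = a ∧ ⟪u, μ'⟫ < 0 := by
        rcases lt_trichotomy ⟪u, μ⟫ 0 with h | h | h
        · exact ⟨μ, hμM, hμs, h⟩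
        · exact absurd h huμ
        · exact ⟨-μ, hMneg μ hμM, by rw [inner_neg_neg]; exact hμs,
            by rw [inner_neg_right]; linarith⟩
      have hne : u ≠ -μ' := by
        intro h
        rw [h, inner_neg_neg, hμ's] at hub
        exact absurd hub hT.a_lt_b.ne
      have hν : u + μ' ∈ R := hT.sum_mem huR (hMR hμ'M) hneg hne
      have hνM : u + μ' ∈ M := hMcl u huM μ' hμ'M hν
      have hνs : ⟪u + μ', u + μ'⟫ = a :=
        ((hT.long_add huR (hMR hμ'M) hub hν).1).trans hμ's
      have hvν : ⟪v, u + μ'⟫ = ⟪v, u⟫ := by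
        rw [inner_add_right, (hvprop μ' hμ'M hμ's).1, add_zero]
      obtain ⟨ν', hν'M, hν's, hnegv⟩ :
          ∃ ν', ν' ∈ M ∧ ⟪ν', ν'⟫ = a ∧ ⟪v, ν'⟫ < 0 := by
        rcases lt_trichotomy ⟪v, u + μ'⟫ 0 with h | h | h
        · exact ⟨u + μ', hνM, hνs, h⟩
        · rw [hvν] at h; exact absurd h hvu
        · exact ⟨-(u + μ'), hMneg _ hνM, by rw [inner_neg_neg]; exact hνs,
            by rw [inner_neg_right]; linarith⟩
      have hnev : v ≠ -ν' := fun h => hvM (h ▸ hMneg ν' hν'M)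
      exact (hvprop ν' hν'M hν's).2 (hT.sum_mem hvR (hMR hν'M) hnegv hnev)
    -- T = M ∪ Bo
    set Tset : Set V := M ∪ Bo with hTdef
    have hTsub : Tset ⊆ R := by
      rintro y (hy | hy)
      · exact hMR hy
      · exact hy.1
    -- the mixed sum case
    have hMB : ∀ u ∈ M, ∀ v ∈ Bo, u + v ∈ R → u + v ∈ Bo := by
      intro u huM v hvBo hsumR
      obtain ⟨hvR, hvM, hvprop⟩ := hvBo
      have huR := hMR huM
      have hub : ⟪u, u⟫ = b := by
        rcases hT.len u huR with h | h
        · exact absurd (by rwa [add_comm] at hsumR) (hvprop u huM h).2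
        · exact h
      obtain ⟨hlen, hin⟩ := hT.long_add huR hvR hub hsumR
      have hvu_ne : ⟪v, u⟫ ≠ 0 := by
        rw [real_inner_comm]
        intro h
        rw [h] at hin
        have := hT.b_pos
        linarith
      have hu_orth := (hLemNu u huM v ⟨hvR, hvM, hvprop⟩ hvu_ne).2
      have hwM : u + v ∉ M := by
        intro h
        apply hvM
        have h2 : (u + v) + (-u) ∈ M := by
          apply hMcl _ h _ (hMneg u huM)
          rw [show (u + v) + (-u) = v by abel]
          exact hvR
        rwa [show (u + v) + (-u) = v by abel] at h2
      refine ⟨hsumR, hwM, ?_⟩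
      intro μ hμM hμs
      have horth : ⟪u + v, μ⟫ = 0 := by
        rw [inner_add_left, hu_orth μ hμM hμs, (hvprop μ hμM hμs).1, add_zero]
      refine ⟨horth, ?_⟩
      intro hz
      rcases hT.len (u + v) hsumR with hwl | hwl
      · -- u+v short: the z-trick
        have hzu : ⟪(u + v) + μ, u⟫ = b / 2 := by
          rw [inner_add_left, inner_add_left]
          have h1 : ⟪v, u⟫ = -b / 2 := by
            rw [real_inner_comm]; linarith
          have h2 : ⟪μ, u⟫ = 0 := by
            rw [real_inner_comm]; exact hu_orth μ hμM hμs
          rw [hub, h1, h2]; ring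
        have hzne : (u + v) + μ ≠ u := by
          intro h
          have hvμ : v + μ = 0 := by
            have h' : u + (v + μ) = u + 0 := by
              rw [add_zero, ← add_assoc]; exact h
            exact add_left_cancel h'
          have hveq : v = -μ := eq_neg_of_add_eq_zero_left hvμ
          have h0 := (hvprop μ hμM hμs).1
          rw [hveq, inner_neg_left, hμs] at h0
          linarith [hT.a_pos]
        have hzmem : ((u + v) + μ) + (-u) ∈ R := by
          apply hT.sum_mem hz (hT.neg_mem huR)
          · rw [inner_neg_right]; linarith [hzu, hT.b_pos]
          · rw [neg_neg]; exact hzne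
        rw [show ((u + v) + μ) + (-u) = v + μ by abel] at hzmem
        exact (hvprop μ hμM hμs).2 hzmem
      · -- u+v long: no sum with an orthogonal short root
        exact hT.no_sum_of_long_orth hsumR (hMR hμM) hwl horth hz
    -- Bo + Bo sums
    have hBB : ∀ u ∈ Bo, ∀ v ∈ Bo, u + v ∈ R → u + v ∈ Tset := by
      intro u huBo v hvBo hsumR
      obtain ⟨huR, huM, huprop⟩ := huBo
      obtain ⟨hvR, hvM, hvprop⟩ := hvBo
      by_cases hwM : u + v ∈ M
      · exact Or.inl hwM
      refine Or.inr ⟨hsumR, hwM, ?_⟩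
      intro μ hμM hμs
      have horth : ⟪u + v, μ⟫ = 0 := by
        rw [inner_add_left, (huprop μ hμM hμs).1, (hvprop μ hμM hμs).1, add_zero]
      refine ⟨horth, ?_⟩
      intro hz
      have hpos : ⟪(u + v) + μ, u⟫ + ⟪(u + v) + μ, v⟫ > 0 := by
        have h1 : ⟪(u + v) + μ, u⟫ + ⟪(u + v) + μ, v⟫ = ⟪(u + v) + μ, u + v⟫ := by
          rw [inner_add_right]
        have h2 : ⟪μ, u + v⟫ = 0 := by rw [real_inner_comm]; exact horth
        rw [h1, inner_add_left, h2, add_zero]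
        exact hT.inner_self_pos hsumR
      have hcases : ⟪(u + v) + μ, u⟫ > 0 ∨ ⟪(u + v) + μ, v⟫ > 0 := by
        by_contra h
        push_neg at h
        linarith [h.1, h.2]
      rcases hcases with hgt | hgt
      · have hzne : (u + v) + μ ≠ u := by
          intro h
          have hvμ : v + μ = 0 := by
            have h' : u + (v + μ) = u + 0 := by
              rw [add_zero, ← add_assoc]; exact h
            exact add_left_cancel h'
          have hveq : v = -μ := eq_neg_of_add_eq_zero_left hvμ
          have h0 := (hvprop μ hμM hμs).1
          rw [hveq, inner_neg_left, hμs] at h0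
          linarith [hT.a_pos]
        have hmem : ((u + v) + μ) + (-u) ∈ R := by
          apply hT.sum_mem hz (hT.neg_mem huR)
          · rw [inner_neg_right]; linarith
          · rw [neg_neg]; exact hzne
        rw [show ((u + v) + μ) + (-u) = v + μ by abel] at hmem
        exact (hvprop μ hμM hμs).2 hmem
      · have hzne : (u + v) + μ ≠ v := by
          intro h
          have huμ : u + μ = 0 := by
            have h' : v + (u + μ) = v + 0 := by
              rw [add_zero]
              rw [show v + (u + μ) = (u + v) + μ by abel]
              exact h
            exact add_left_cancel h'
          have hueq : u = -μ := eq_neg_of_add_eq_zero_left huμ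
          have h0 := (huprop μ hμM hμs).1
          rw [hueq, inner_neg_left, hμs] at h0
          linarith [hT.a_pos]
        have hmem : ((u + v) + μ) + (-v) ∈ R := by
          apply hT.sum_mem hz (hT.neg_mem hvR)
          · rw [inner_neg_right]; linarith
          · rw [neg_neg]; exact hzne
        rw [show ((u + v) + μ) + (-v) = u + μ by abel] at hmem
        exact (huprop μ hμM hμs).2 hmem
    -- T is closed
    have hTclosed : ∀ u ∈ Tset, ∀ v ∈ Tset, u + v ∈ R → u + v ∈ Tset := by
      rintro u (huM | huBo) v (hvM | hvBo) hsumR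
      · exact Or.inl (hMcl u huM v hvM hsumR)
      · exact Or.inr (hMB u huM v hvBo hsumR)
      · rw [add_comm] at hsumR ⊢
        exact Or.inr (hMB v hvM u huBo hsumR)
      · exact hBB u huBo v hvBo hsumR
    -- T is reflection-stable
    have hTstab : ∀ u ∈ Tset, ∀ v ∈ Tset, reflV u v ∈ Tset := by
      intro u huT v hvT
      by_cases hc : cartanPair u v = 0
      · have : reflV u v = v := by unfold reflV; rw [hc]; simp
        rw [this]; exact hvT
      have huR := hTsub huT
      have hvR := hTsub hvT
      have hvu : ⟪v, u⟫ ≠ 0 := fun h => hc (cartanPair_zero_of_orth h)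
      have huu := hT.inner_self_ne huR
      have hwR : reflV u v ∈ R := hT.root.refl_mem u huR v hvR
      rcases huT with huM | huBo
      · rcases hvT with hvM | hvBo
        · exact Or.inl (hMstab u huM v hvM)
        · -- u ∈ M, v ∈ Bo
          obtain ⟨hub, hu_orth⟩ := hLemNu u huM v hvBo hvu
          obtain ⟨hvR', hvM, hvprop⟩ := hvBo
          have hwM : reflV u v ∉ M := by
            intro h
            apply hvM
            have := hMstab u huM _ h
            rwa [reflV_invol huu] at this
          refine Or.inr ⟨hwR, hwM, ?_⟩
          intro μ hμM hμs
          have horth : ⟪reflV u v, μ⟫ = 0 := by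
            unfold reflV
            rw [inner_sub_left, real_inner_smul_left, (hvprop μ hμM hμs).1,
              hu_orth μ hμM hμs]
            ring
          refine ⟨horth, ?_⟩
          intro hzR
          have hrefl : reflV u (reflV u v + μ) ∈ R := hT.root.refl_mem u huR _ hzR
          rw [reflV_add, reflV_invol huu,
            reflV_orth (by rw [real_inner_comm]; exact hu_orth μ hμM hμs)] at hrefl
          exact (hvprop μ hμM hμs).2 hrefl
      · rcases hvT with hvM | hvBo
        · -- u ∈ Bo, v ∈ M
          obtain ⟨huR', huM, huprop⟩ := huBo
          have huv : ⟪u, v⟫ ≠ 0 := by rw [real_inner_comm]; exact hvu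
          obtain ⟨hvb, hv_orth⟩ := hLemNu v hvM u ⟨huR', huM, huprop⟩ huv
          have hwb : ⟪reflV u v, reflV u v⟫ = b := by
            rw [inner_reflV_self huu]; exact hvb
          by_cases hwM : reflV u v ∈ M
          · exact Or.inl hwM
          refine Or.inr ⟨hwR, hwM, ?_⟩
          intro μ hμM hμs
          have horth : ⟪reflV u v, μ⟫ = 0 := by
            unfold reflV
            rw [inner_sub_left, real_inner_smul_left, hv_orth μ hμM hμs,
              (huprop μ hμM hμs).1]
            ring
          exact ⟨horth, hT.no_sum_of_long_orth hwR (hMR hμM) hwb horth⟩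
        · -- u, v ∈ Bo
          obtain ⟨huR', huM, huprop⟩ := huBo
          obtain ⟨hvR', hvM, hvprop⟩ := hvBo
          by_cases hwM : reflV u v ∈ M
          · exact Or.inl hwM
          refine Or.inr ⟨hwR, hwM, ?_⟩
          intro μ hμM hμs
          have horth : ⟪reflV u v, μ⟫ = 0 := by
            unfold reflV
            rw [inner_sub_left, real_inner_smul_left, (hvprop μ hμM hμs).1,
              (huprop μ hμM hμs).1]
            ring
          refine ⟨horth, ?_⟩
          intro hzR
          have hrefl : reflV u (reflV u v + μ) ∈ R := hT.root.refl_mem u huR _ hzR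
          rw [reflV_add, reflV_invol huu,
            reflV_orth (by rw [real_inner_comm]; exact (huprop μ hμM hμs).1)] at hrefl
          exact (hvprop μ hμM hμs).2 hrefl
    -- T must be all of R
    have hTR : Tset = R := by
      by_contra hne
      have hTM : Tset = M :=
        hMmax Tset ⟨⟨μ0, Or.inl hμ0M⟩, hTsub, hne, hTstab⟩ hTclosed
          Set.subset_union_left
      have : x.1 ∈ M := hTM ▸ (Or.inr hγ0Bo)
      exact hxM this
    -- final contradiction via irreducibility
    set Aset : Set V := {y | y ∈ R ∧ ∃ μ ∈ M, ⟪μ, μ⟫ = a ∧ ⟪y, μ⟫ ≠ 0} with hAdef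
    set Bset : Set V := R \ Aset with hBdef
    have hcover : R = Aset ∪ Bset := by
      ext y
      constructor
      · intro hy
        by_cases h : y ∈ Aset
        · exact Or.inl h
        · exact Or.inr ⟨hy, h⟩
      · rintro (hy | hy)
        · exact hy.1
        · exact hy.1
    have hAne : Aset.Nonempty :=
      ⟨μ0, hμ0R, μ0, hμ0M, hμ0s, by rw [hμ0s]; exact hT.a_pos.ne'⟩
    have hBne : Bset.Nonempty := by
      refine ⟨x.1, hγ0R, ?_⟩
      rintro ⟨-, μ, hμM, hμs, hne0⟩
      exact hne0 (P0 μ hμM hμs)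
    obtain ⟨p, hpA, q, hqB, hpq⟩ := hT.root.irred Aset Bset hcover hAne hBne
    obtain ⟨hpR, μ1, hμ1M, hμ1s, hpμ1⟩ := hpA
    obtain ⟨hqR, hqA⟩ := hqB
    have hq_orth : ∀ μ ∈ M, ⟪μ, μ⟫ = a → ⟪q, μ⟫ = 0 := by
      intro μ hμ hs
      by_contra h
      exact hqA ⟨hqR, μ, hμ, hs, h⟩
    have hpM : p ∈ M := by
      have hpT : p ∈ Tset := hTR.symm ▸ hpR
      rcases hpT with h | h
      · exact h
      · exact absurd (h.2.2 μ1 hμ1M hμ1s).1 hpμ1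
    apply hpq
    rcases hT.len p hpR with hps | hpl
    · rw [real_inner_comm]; exact hq_orth p hpM hps
    · -- p long: use the ν-trick
      obtain ⟨μ', hμ'M, hμ's, hneg⟩ :
          ∃ μ', μ' ∈ M ∧ ⟪μ', μ'⟫ = a ∧ ⟪p, μ'⟫ < 0 := by
        rcases lt_trichotomy ⟪p, μ1⟫ 0 with h | h | h
        · exact ⟨μ1, hμ1M, hμ1s, h⟩
        · exfalso; apply hpμ1; have hc := real_inner_comm p μ1; linarith
        · exact ⟨-μ1, hMneg μ1 hμ1M, by rw [inner_neg_neg]; exact hμ1s,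
            by rw [inner_neg_right]; linarith⟩
      have hne : p ≠ -μ' := by
        intro h
        rw [h, inner_neg_neg, hμ's] at hpl
        exact absurd hpl hT.a_lt_b.ne
      have hν : p + μ' ∈ R := hT.sum_mem hpR (hMR hμ'M) hneg hne
      have hνM : p + μ' ∈ M := hMcl p hpM μ' hμ'M hν
      have hνs : ⟪p + μ', p + μ'⟫ = a :=
        ((hT.long_add hpR (hMR hμ'M) hpl hν).1).trans hμ's
      have : ⟪p, q⟫ = ⟪q, p + μ'⟫ - ⟪q, μ'⟫ := by
        rw [inner_add_right, real_inner_comm]; ring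
      rw [this, hq_orth _ hνM hνs, hq_orth _ hμ'M hμ's]
      ring
  -- conclude
  apply Set.Subset.antisymm _ hsub
  intro y hy
  exact (mem_lift_iff hT).mpr ⟨hΔsub hy, key y hy⟩

end AuxMonster
section AuxMain

variable {V : Type*} [NormedAddCommGroup V] [InnerProductSpace ℝ V]
variable {R : Set V} {a b : ℝ} {m : ℕ}

local notation "⟪" x ", " y "⟫" => (inner ℝ x y : ℝ)

lemma statement11_aux (hT : IsTwistedData R a b m) (Ψ : Set (V × ℝ)) :
    (IsMaximalClosedSubrootSystem (twistedRS R a b m) Ψ ∧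
      GrT Ψ ⊂ R ∧ IsClosedInF R (GrT Ψ)) ↔
      ∃ M : Set V, IsMaximalClosedSubrootSystemF R M ∧
        (∃ α ∈ M, ShortR R a α) ∧ Ψ = liftT R a b m M := by
  constructor
  · rintro ⟨⟨⟨⟨hne, hsubΦ, hneΦ, hstab⟩, hcl⟩, hmax⟩, hss, hGrcl⟩
    set S := GrT Ψ with hSdef
    have hSR : S ⊆ R := hss.1
    have hSne : S ≠ R := hss.ne
    have hSnonempty : S.Nonempty := by
      obtain ⟨x, hx⟩ := hne
      exact ⟨x.1, x.2, by rwa [Prod.mk.eta]⟩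
    have hSstab : ∀ α ∈ S, ∀ β ∈ S, reflV α β ∈ S := by
      rintro α ⟨cα, hcα⟩ β ⟨cβ, hcβ⟩
      have := hstab (α, cα) hcα (β, cβ) hcβ
      rw [reflA_eq] at this
      exact ⟨_, this⟩
    have hΨlift : Ψ ⊆ liftT R a b m S := by
      intro x hx
      refine (mem_lift_iff hT).mpr ⟨hsubΦ hx, x.2, by rwa [Prod.mk.eta]⟩
    have hliftCS : IsClosedSubrootSystem (twistedRS R a b m) (liftT R a b m S) :=
      lift_closedSRS hT hSnonempty hSR hSne hSstab hGrcl
    have hΨeq : Ψ = liftT R a b m S := (hmax _ hliftCS hΨlift).symm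
    -- S contains a short root
    have hshort : ∃ α ∈ S, ShortR R a α := by
      by_contra hno
      push_neg at hno
      have hSlong : ∀ α ∈ S, ⟪α, α⟫ = b := by
        intro α hα
        rcases hT.len α (hSR hα) with h | h
        · exact absurd ⟨hSR hα, h⟩ (hno α hα)
        · exact h
      have hΨD : Ψ ⊆ {x ∈ twistedRS R a b m | ∃ r : ℤ, x.2 = (m:ℝ) * (r:ℝ)} := by
        intro x hx
        have hx' := hΨeq ▸ hx
        rcases hx' with ⟨hS', hxS, r, hr⟩ | ⟨hL', hxS, r, hr⟩
        · exact absurd (hSlong _ hxS) (by rw [hS'.2]; exact hT.a_lt_b.ne)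
        · exact ⟨Or.inr ⟨hL', r, hr⟩, r, hr⟩
      have hDeq := hmax _ (deltam_closedSRS hT) hΨD
      obtain ⟨αs, hαsR, hαsl⟩ := hT.ex_short
      have hαsD : ((αs, (0:ℝ)) : V × ℝ) ∈
          {x ∈ twistedRS R a b m | ∃ r : ℤ, x.2 = (m:ℝ) * (r:ℝ)} :=
        ⟨mem_twisted_zero hT hαsR, 0, by norm_num⟩
      rw [hDeq, hΨeq] at hαsD
      have hαsS : αs ∈ S := ((mem_lift_iff hT).mp hαsD).2
      have := hSlong αs hαsS
      rw [hαsl] at this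
      exact hT.a_lt_b.ne this
    -- S is maximal
    have hSmax : ∀ T, IsSubrootSystemF R T → IsClosedInF R T → S ⊆ T → T = S := by
      intro T ⟨hTne, hTR', hTneR, hTstab⟩ hTcl hST
      have hliftT : IsClosedSubrootSystem (twistedRS R a b m) (liftT R a b m T) :=
        lift_closedSRS hT hTne hTR' hTneR hTstab hTcl
      have hsub2 : Ψ ⊆ liftT R a b m T := hΨeq ▸ lift_mono hT hST
      have := hmax _ hliftT hsub2
      calc T = GrT (liftT R a b m T) := (GrT_lift hT hTR').symm
        _ = GrT Ψ := by rw [this]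
        _ = S := rfl
    exact ⟨S, ⟨⟨⟨hSnonempty, hSR, hSne, hSstab⟩, hGrcl⟩, hSmax⟩, hshort, hΨeq⟩
  · rintro ⟨M, hM, hshort, rfl⟩
    obtain ⟨⟨⟨hMne, hMR, hMneR, hMstab⟩, hMcl⟩, hMmax⟩ := hM
    have hGr : GrT (liftT R a b m M) = M := GrT_lift hT hMR
    refine ⟨⟨lift_closedSRS hT hMne hMR hMneR hMstab hMcl, ?_⟩, ?_, ?_⟩
    · exact lift_maximal hT ⟨⟨⟨hMne, hMR, hMneR, hMstab⟩, hMcl⟩, hMmax⟩ hshort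
    · rw [hGr]; exact ⟨hMR, fun h => hMneR (Set.Subset.antisymm hMR h)⟩
    · rw [hGr]; exact hMcl

end AuxMain
/-- `Ψ` is a maximal closed subroot system of the twisted affine
root system whose gradient is a proper closed subset of `Φ̊` iff `Ψ` is the lift of
a maximal closed subroot system of `Φ̊` containing a short root. -/
theorem statement11
    {V : Type*} [NormedAddCommGroup V] [InnerProductSpace ℝ V] [FiniteDimensional ℝ V]
    (R : Set V) (a b : ℝ) (m : ℕ) (hT : IsTwistedData R a b m)
    (Ψ : Set (V × ℝ)) :
    (IsMaximalClosedSubrootSystem (twistedRS R a b m) Ψ ∧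
      GrT Ψ ⊂ R ∧ IsClosedInF R (GrT Ψ)) ↔
      ∃ M : Set V, IsMaximalClosedSubrootSystemF R M ∧
        (∃ α ∈ M, ShortR R a α) ∧ Ψ = liftT R a b m M := by
  exact statement11_aux hT Ψ
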